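/- Let v, h, ṽ, h̃ be continuous on [0,∞). If ∫_0^t e^{-(t-s)}[v(s) f_1'(0) + c_1 h(s)] ds = ∫_0^t e^{-(t-s)}[ṽ(s) f_1'(0) + c_1 h̃(s)] ds and ∫_0^t e^{-9(t-s)}[v(s) f_3'(0) + c_3 h(s)] ds = ∫_0^t e^{-9(t-s)}[ṽ(s) f_3'(0) + c_3 h̃(s)] ds for all t ≥ 0, then v = ṽ and h = h̃. -/

import Mathlib

open Real

lemma aux_zero_16 (F : ℝ → ℝ) (hF : Continuous F)
    (h0 : ∀ t : ℝ, 0 ≤ t → (∫ s in (0:ℝ)..t, F s) = 0) :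
    ∀ t : ℝ, 0 ≤ t → F t = 0 := by
  have hpos : ∀ t : ℝ, 0 < t → F t = 0 := by
    intro t ht
    have hd : deriv (fun u => ∫ s in (0:ℝ)..u, F s) t = F t :=
      Continuous.deriv_integral F hF 0 t
    have hEq : (fun u => ∫ s in (0:ℝ)..u, F s) =ᶠ[nhds t] (fun _ => (0:ℝ)) := by
      filter_upwards [Ioi_mem_nhds ht] with u hu
      exact h0 u (le_of_lt hu)
    have hz : deriv (fun u => ∫ s in (0:ℝ)..u, F s) t = 0 := by
      rw [hEq.deriv_eq]; simp
    rw [hd] at hz; exact hz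
  intro t ht
  rcases eq_or_lt_of_le ht with rfl | ht'
  · have heqon : Set.EqOn F (fun _ => (0:ℝ)) (Set.Ioi 0) := fun x hx => hpos x hx
    have := heqon.closure hF continuous_const
    have h0' := this (by rw [closure_Ioi]; exact Set.self_mem_Ici : (0:ℝ) ∈ closure (Set.Ioi (0:ℝ)))
    simpa using h0'
  · exact hpos t ht'

theorem stmt_16 (v h v2 h2 : ℝ → ℝ) (hv : Continuous v) (hh : Continuous h)
    (hv2 : Continuous v2) (hh2 : Continuous h2)
    (heq1 : ∀ t : ℝ, 0 ≤ t →
      (∫ s in (0:ℝ)..t,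
          Real.exp (-(t - s)) * (v s * Real.sqrt (2 / π) + 2 * Real.sqrt (2 / π) * h s))
        = ∫ s in (0:ℝ)..t,
            Real.exp (-(t - s)) * (v2 s * Real.sqrt (2 / π) + 2 * Real.sqrt (2 / π) * h2 s))
    (heq3 : ∀ t : ℝ, 0 ≤ t →
      (∫ s in (0:ℝ)..t,
          Real.exp (-9 * (t - s)) *
            (v s * (3 * Real.sqrt (2 / π)) + (2 / 3) * Real.sqrt (2 / π) * h s))
        = ∫ s in (0:ℝ)..t,
            Real.exp (-9 * (t - s)) *
              (v2 s * (3 * Real.sqrt (2 / π)) + (2 / 3) * Real.sqrt (2 / π) * h2 s)) :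
    (∀ t : ℝ, 0 ≤ t → v t = v2 t) ∧ (∀ t : ℝ, 0 ≤ t → h t = h2 t) := by
  set c := Real.sqrt (2 / π) with hc
  have hcpos : 0 < c := Real.sqrt_pos.mpr (by positivity)
  -- rewrite the kernel
  have key1 : ∀ (A : ℝ → ℝ) (t : ℝ),
      (∫ s in (0:ℝ)..t, Real.exp (-(t - s)) * A s)
        = Real.exp (-t) * ∫ s in (0:ℝ)..t, Real.exp s * A s := by
    intro A t
    rw [← intervalIntegral.integral_const_mul]
    refine intervalIntegral.integral_congr fun s _ => ?_
    rw [← mul_assoc, ← Real.exp_add]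
    ring_nf
  have key9 : ∀ (A : ℝ → ℝ) (t : ℝ),
      (∫ s in (0:ℝ)..t, Real.exp (-9 * (t - s)) * A s)
        = Real.exp (-9 * t) * ∫ s in (0:ℝ)..t, Real.exp (9 * s) * A s := by
    intro A t
    rw [← intervalIntegral.integral_const_mul]
    refine intervalIntegral.integral_congr fun s _ => ?_
    rw [← mul_assoc, ← Real.exp_add]
    ring_nf
  -- first integrand difference
  have cA : Continuous (fun s => v s * c + 2 * c * h s) :=
    (hv.mul continuous_const).add (continuous_const.mul hh)
  have cB : Continuous (fun s => v2 s * c + 2 * c * h2 s) :=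
    (hv2.mul continuous_const).add (continuous_const.mul hh2)
  have cA9 : Continuous (fun s => v s * (3 * c) + 2 / 3 * c * h s) :=
    (hv.mul continuous_const).add (continuous_const.mul hh)
  have cB9 : Continuous (fun s => v2 s * (3 * c) + 2 / 3 * c * h2 s) :=
    (hv2.mul continuous_const).add (continuous_const.mul hh2)
  have cE9 : Continuous (fun s : ℝ => Real.exp (9 * s)) :=
    Real.continuous_exp.comp (continuous_const.mul continuous_id)
  have cont1 : Continuous (fun s => Real.exp s * (v s * c + 2 * c * h s)
      - Real.exp s * (v2 s * c + 2 * c * h2 s)) :=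
    (Real.continuous_exp.mul cA).sub (Real.continuous_exp.mul cB)
  have cont9 : Continuous (fun s => Real.exp (9 * s) * (v s * (3 * c) + 2 / 3 * c * h s)
      - Real.exp (9 * s) * (v2 s * (3 * c) + 2 / 3 * c * h2 s)) :=
    (cE9.mul cA9).sub (cE9.mul cB9)
  have int1 : ∀ t : ℝ, 0 ≤ t →
      (∫ s in (0:ℝ)..t, (Real.exp s * (v s * c + 2 * c * h s)
        - Real.exp s * (v2 s * c + 2 * c * h2 s))) = 0 := by
    intro t ht
    have := heq1 t ht
    rw [key1, key1] at this
    have hE : Real.exp (-t) ≠ 0 := (Real.exp_pos _).ne'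
    have heq := mul_left_cancel₀ hE this
    rw [intervalIntegral.integral_sub
      (show IntervalIntegrable (fun s => Real.exp s * (v s * c + 2 * c * h s)) MeasureTheory.volume 0 t from
        (Real.continuous_exp.mul cA).intervalIntegrable 0 t)
      (show IntervalIntegrable (fun s => Real.exp s * (v2 s * c + 2 * c * h2 s)) MeasureTheory.volume 0 t from
        (Real.continuous_exp.mul cB).intervalIntegrable 0 t), heq, sub_self]
  have int9 : ∀ t : ℝ, 0 ≤ t →
      (∫ s in (0:ℝ)..t, (Real.exp (9 * s) * (v s * (3 * c) + 2 / 3 * c * h s)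
        - Real.exp (9 * s) * (v2 s * (3 * c) + 2 / 3 * c * h2 s))) = 0 := by
    intro t ht
    have := heq3 t ht
    rw [key9, key9] at this
    have hE : Real.exp (-9 * t) ≠ 0 := (Real.exp_pos _).ne'
    have heq := mul_left_cancel₀ hE this
    rw [intervalIntegral.integral_sub
      (show IntervalIntegrable (fun s => Real.exp (9 * s) * (v s * (3 * c) + 2 / 3 * c * h s)) MeasureTheory.volume 0 t from
        (cE9.mul cA9).intervalIntegrable 0 t)
      (show IntervalIntegrable (fun s => Real.exp (9 * s) * (v2 s * (3 * c) + 2 / 3 * c * h2 s)) MeasureTheory.volume 0 t from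
        (cE9.mul cB9).intervalIntegrable 0 t), heq, sub_self]
  have p1 := aux_zero_16 _ cont1 int1
  have p9 := aux_zero_16 _ cont9 int9
  have main : ∀ t : ℝ, 0 ≤ t → v t = v2 t ∧ h t = h2 t := by
    intro t ht
    have e1 := p1 t ht
    have e9 := p9 t ht
    have hE1 : Real.exp t ≠ 0 := (Real.exp_pos _).ne'
    have hE9 : Real.exp (9 * t) ≠ 0 := (Real.exp_pos _).ne'
    have l1 : (v t - v2 t) + 2 * (h t - h2 t) = 0 := by
      have : Real.exp t * (c * ((v t - v2 t) + 2 * (h t - h2 t))) = 0 := by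
        rw [← e1]; ring
      rcases mul_eq_zero.mp this with hx | hx
      · exact absurd hx hE1
      rcases mul_eq_zero.mp hx with hx | hx
      · exact absurd hx hcpos.ne'
      · exact hx
    have l9 : 3 * (v t - v2 t) + 2 / 3 * (h t - h2 t) = 0 := by
      have : Real.exp (9 * t) * (c * (3 * (v t - v2 t) + 2 / 3 * (h t - h2 t))) = 0 := by
        rw [← e9]; ring
      rcases mul_eq_zero.mp this with hx | hx
      · exact absurd hx hE9
      rcases mul_eq_zero.mp hx with hx | hx
      · exact absurd hx hcpos.ne'
      · exact hx
    constructor <;> linarith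
  exact ⟨fun t ht => (main t ht).1, fun t ht => (main t ht).2⟩
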